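/- Let Q_X : ℕ → [0,1] be a probability mass function on ℕ and Q_Z : ℕ×ℕ → [0,1] a probability mass function on ℕ×ℕ. Assume that for every k ≥ 1, Q_X(k) ≥ Σ_{l=0}^{k} Q_Z(k−l, l). Then for every s ∈ [0,1], Σ_{k≥0} Q_X(k)·s^k ≤ Σ_{(k,l)∈ℕ×ℕ} Q_Z(k,l)·s^{k+l}. -/

import Mathlib

set_option maxHeartbeats 1000000

lemma tsum_prod_eq_tsum_antidiagonal {h : ℕ × ℕ → ℝ} (hh : Summable h) :
    ∑' p : ℕ × ℕ, h p = ∑' n : ℕ, ∑ p ∈ Finset.HasAntidiagonal.antidiagonal n, h p := by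
  conv_rhs => congr; ext; rw [← Finset.sum_finset_coe, ← tsum_fintype (L := .unconditional _)]
  rw [← Finset.HasAntidiagonal.sigmaAntidiagonalEquivProd.tsum_eq h]
  exact Summable.tsum_sigma' (fun n ↦ (hasSum_fintype _).summable)
    (Finset.HasAntidiagonal.sigmaAntidiagonalEquivProd.summable_iff.mpr hh)

lemma summable_antidiagonal_sum {h : ℕ × ℕ → ℝ} (hh : Summable h) :
    Summable fun n : ℕ ↦ ∑ p ∈ Finset.HasAntidiagonal.antidiagonal n, h p := by
  conv => congr; ext; rw [← Finset.sum_finset_coe, ← tsum_fintype (L := .unconditional _)]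
  exact (Finset.HasAntidiagonal.sigmaAntidiagonalEquivProd.summable_iff.mpr hh).sigma'
    (fun n ↦ (hasSum_fintype _).summable)

theorem pgf_comparison
    (QX : ℕ → ℝ) (hQX0 : ∀ k, 0 ≤ QX k) (hQX1 : ∀ k, QX k ≤ 1)
    (hQXsum : ∑' k, QX k = 1)
    (QZ : ℕ × ℕ → ℝ) (hQZ0 : ∀ p, 0 ≤ QZ p) (hQZ1 : ∀ p, QZ p ≤ 1)
    (hQZsum : ∑' p, QZ p = 1)
    (hdom : ∀ k : ℕ, 1 ≤ k → (∑ l ∈ Finset.range (k + 1), QZ (k - l, l)) ≤ QX k) :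
    ∀ s ∈ Set.Icc (0 : ℝ) 1,
      ∑' k : ℕ, QX k * s ^ k ≤ ∑' p : ℕ × ℕ, QZ p * s ^ (p.1 + p.2) := by
  rintro s ⟨hs0, hs1⟩
  have hpow0 : ∀ n : ℕ, 0 ≤ s ^ n := fun n => pow_nonneg hs0 n
  have hpow1 : ∀ n : ℕ, s ^ n ≤ 1 := fun n => pow_le_one₀ hs0 hs1
  -- summability
  have sQX : Summable QX := by
    by_contra h; rw [tsum_eq_zero_of_not_summable h] at hQXsum; norm_num at hQXsum
  have sQZ : Summable QZ := by
    by_contra h; rw [tsum_eq_zero_of_not_summable h] at hQZsum; norm_num at hQZsum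
  have sQZs : Summable (fun p : ℕ × ℕ => QZ p * s ^ (p.1 + p.2)) := by
    apply Summable.of_nonneg_of_le (fun p => mul_nonneg (hQZ0 p) (hpow0 _))
      (fun p => by nlinarith [hQZ0 p, hpow1 (p.1 + p.2)]) sQZ
  -- the total-offspring law
  set g : ℕ → ℝ := fun n => ∑ p ∈ Finset.HasAntidiagonal.antidiagonal n, QZ p with hg
  have hg0 : ∀ n, 0 ≤ g n := fun n => Finset.sum_nonneg fun p _ => hQZ0 p
  have sg : Summable g := summable_antidiagonal_sum sQZ
  have hgsum : ∑' n, g n = 1 := by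
    rw [← tsum_prod_eq_tsum_antidiagonal sQZ]; exact hQZsum
  have hgdom : ∀ k : ℕ, 1 ≤ k → g k ≤ QX k := by
    intro k hk
    refine le_trans (le_of_eq ?_) (hdom k hk)
    show (∑ p ∈ Finset.HasAntidiagonal.antidiagonal k, QZ p) = _
    rw [Finset.Nat.sum_antidiagonal_eq_sum_range_succ_mk, ← Finset.sum_range_reflect]
    refine Finset.sum_congr rfl fun j hj => ?_
    rw [Finset.mem_range] at hj
    have h1 : k + 1 - 1 - j = k - j := by omega
    have h2 : k - (k - j) = j := by omega
    rw [h1, h2]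
  -- rewrite RHS
  have hRHS : ∑' p : ℕ × ℕ, QZ p * s ^ (p.1 + p.2) = ∑' n, g n * s ^ n := by
    rw [tsum_prod_eq_tsum_antidiagonal sQZs]
    refine tsum_congr fun n => ?_
    show _ = (∑ p ∈ Finset.HasAntidiagonal.antidiagonal n, QZ p) * s ^ n
    rw [Finset.sum_mul]
    refine Finset.sum_congr rfl fun p hp => ?_
    rw [Finset.HasAntidiagonal.mem_antidiagonal] at hp
    rw [hp]
  rw [hRHS]
  -- summability of weighted sums
  have sQXs : Summable (fun n => QX n * s ^ n) :=
    Summable.of_nonneg_of_le (fun n => mul_nonneg (hQX0 n) (hpow0 n))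
      (fun n => by nlinarith [hQX0 n, hpow1 n]) sQX
  have sgs : Summable (fun n => g n * s ^ n) :=
    Summable.of_nonneg_of_le (fun n => mul_nonneg (hg0 n) (hpow0 n))
      (fun n => by nlinarith [hg0 n, hpow1 n]) sg
  have sQX1 : Summable (fun n => QX (n + 1)) := (summable_nat_add_iff 1).mpr sQX
  have sg1 : Summable (fun n => g (n + 1)) := (summable_nat_add_iff 1).mpr sg
  have sQXs1 : Summable (fun n => QX (n + 1) * s ^ (n + 1)) := (summable_nat_add_iff 1).mpr sQXs
  have sgs1 : Summable (fun n => g (n + 1) * s ^ (n + 1)) := (summable_nat_add_iff 1).mpr sgs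
  -- decomposition
  have dA : ∑' n, QX n * s ^ n = QX 0 * s ^ 0 + ∑' n, QX (n + 1) * s ^ (n + 1) :=
    Summable.tsum_eq_zero_add sQXs
  have dB : ∑' n, g n * s ^ n = g 0 * s ^ 0 + ∑' n, g (n + 1) * s ^ (n + 1) :=
    Summable.tsum_eq_zero_add sgs
  have dA' : (1 : ℝ) = QX 0 + ∑' n, QX (n + 1) := by rw [← hQXsum]; exact Summable.tsum_eq_zero_add sQX
  have dB' : (1 : ℝ) = g 0 + ∑' n, g (n + 1) := by rw [← hgsum]; exact Summable.tsum_eq_zero_add sg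
  -- key termwise inequality
  have key : ∑' n, QX (n + 1) * (s ^ (n + 1) - 1) ≤ ∑' n, g (n + 1) * (s ^ (n + 1) - 1) := by
    refine Summable.tsum_le_tsum (fun n => ?_) ?_ ?_
    · have h1 : s ^ (n + 1) - 1 ≤ 0 := by linarith [hpow1 (n + 1)]
      have h2 : g (n + 1) ≤ QX (n + 1) := hgdom (n + 1) (by omega)
      nlinarith
    · simpa [mul_sub] using sQXs1.sub sQX1
    · simpa [mul_sub] using sgs1.sub sg1
  have keyA : ∑' n, QX (n + 1) * (s ^ (n + 1) - 1)
      = (∑' n, QX (n + 1) * s ^ (n + 1)) - ∑' n, QX (n + 1) := by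
    rw [← Summable.tsum_sub sQXs1 sQX1]; exact tsum_congr fun n => by ring
  have keyB : ∑' n, g (n + 1) * (s ^ (n + 1) - 1)
      = (∑' n, g (n + 1) * s ^ (n + 1)) - ∑' n, g (n + 1) := by
    rw [← Summable.tsum_sub sgs1 sg1]; exact tsum_congr fun n => by ring
  rw [keyA, keyB] at key
  rw [dA, dB]
  simp only [pow_zero, mul_one]
  linarith
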